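/- Let 𝒱 be a non-empty set of subspaces of ℝ^d, for each V ∈ 𝒱 let 𝒰(V) be a non-empty set of subspaces of ℝ^d, and let γ ∈ ℝ. Then: (1) if there exists V ∈ 𝒱 such that D1(γ,U) holds uniformly for all U ∈ 𝒰(V), then γ ≥ inf_{V∈𝒱} sup_{U∈𝒰(V)} β̄(U); (2) if γ > inf_{V∈𝒱} sup_{U∈𝒰(V)} β̄(U), then there exists V ∈ 𝒱 such that D1(γ,U) holds uniformly for all U ∈ 𝒰(V). -/

import Mathlib

open Set Filter Topology

noncomputable section

abbrev Euc (d : ℕ) := EuclideanSpace ℝ (Fin d)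

/-- The solution `x(n, x₀)` of `x(n+1) = A(n) x(n)`, `x(0,x₀) = x₀`. -/
def sol {d : ℕ} (A : ℕ → (Euc d ≃L[ℝ] Euc d)) : ℕ → Euc d → Euc d
  | 0, x => x
  | n + 1, x => A n (sol A n x)

/-- Boundedness of the coefficients `A(n)` and their inverses. -/
def BddSys {d : ℕ} (A : ℕ → (Euc d ≃L[ℝ] Euc d)) : Prop :=
  (∃ c : ℝ, ∀ n : ℕ, ‖(A n : Euc d →L[ℝ] Euc d)‖ ≤ c) ∧
  (∃ c : ℝ, ∀ n : ℕ, ‖((A n).symm : Euc d →L[ℝ] Euc d)‖ ≤ c)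

/-- `D1(γ,U)` holds uniformly (constant `C`). -/
def D1u {d : ℕ} (A : ℕ → (Euc d ≃L[ℝ] Euc d)) (γ : ℝ) (U : Submodule ℝ (Euc d)) : Prop :=
  ∃ C : ℝ, 0 < C ∧
    ∀ m n : ℕ, m ≤ n → ∀ x₀ ∈ U,
      ‖sol A n x₀‖ ≤ C * Real.exp (γ * ((n : ℝ) - (m : ℝ))) * ‖sol A m x₀‖

/-- Upper Bohl exponent `β̄(U)` (with the convention `sSup ∅ = -∞` in `EReal`). -/
def upperBohl {d : ℕ} (A : ℕ → (Euc d ≃L[ℝ] Euc d)) (U : Submodule ℝ (Euc d)) : EReal :=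
  ⨅ N : ℕ, sSup {r : EReal | ∃ m n : ℕ, ∃ x₀ ∈ U, x₀ ≠ 0 ∧ N < n - m ∧
    r = ((((n : ℝ) - (m : ℝ))⁻¹ * Real.log (‖sol A n x₀‖ / ‖sol A m x₀‖) : ℝ) : EReal)}

lemma sol_eq_zero_iff {d : ℕ} (A : ℕ → (Euc d ≃L[ℝ] Euc d)) (n : ℕ) (x : Euc d) :
    sol A n x = 0 ↔ x = 0 := by
  induction n with
  | zero => rfl
  | succ n ih => simp [sol, ih]
lemma norm_sol_pos {d : ℕ} (A : ℕ → (Euc d ≃L[ℝ] Euc d)) (n : ℕ) {x : Euc d} (hx : x ≠ 0) :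
    0 < ‖sol A n x‖ := by
  rw [norm_pos_iff]
  exact fun h => hx ((sol_eq_zero_iff A n x).mp h)
lemma sol_growth {d : ℕ} (A : ℕ → (Euc d ≃L[ℝ] Euc d)) {a : ℝ}
    (ha : ∀ n : ℕ, ‖(A n : Euc d →L[ℝ] Euc d)‖ ≤ a) (ha1 : 1 ≤ a)
    (x : Euc d) {m n : ℕ} (h : m ≤ n) :
    ‖sol A n x‖ ≤ a ^ (n - m) * ‖sol A m x‖ := by
  induction n, h using Nat.le_induction with
  | base => simp
  | succ n hmn ih =>
    have h1 : ‖sol A (n+1) x‖ ≤ a * ‖sol A n x‖ := by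
      calc ‖sol A (n+1) x‖ = ‖(A n : Euc d →L[ℝ] Euc d) (sol A n x)‖ := rfl
        _ ≤ ‖(A n : Euc d →L[ℝ] Euc d)‖ * ‖sol A n x‖ := (A n : Euc d →L[ℝ] Euc d).le_opNorm _
        _ ≤ a * ‖sol A n x‖ := mul_le_mul_of_nonneg_right (ha n) (norm_nonneg _)
    have h2 : n + 1 - m = (n - m) + 1 := by omega
    rw [h2, pow_succ]
    calc ‖sol A (n+1) x‖ ≤ a * ‖sol A n x‖ := h1
      _ ≤ a * (a ^ (n-m) * ‖sol A m x‖) := mul_le_mul_of_nonneg_left ih (by linarith)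
      _ = a ^ (n-m) * a * ‖sol A m x‖ := by ring

lemma upperBohl_le_of_D1u {d : ℕ} {A : ℕ → (Euc d ≃L[ℝ] Euc d)} {γ : ℝ}
    {U : Submodule ℝ (Euc d)} (h : D1u A γ U) : upperBohl A U ≤ (γ : EReal) := by
  obtain ⟨C, hC, hb⟩ := h
  by_contra hlt
  push_neg at hlt
  obtain ⟨γ', h1, h2⟩ := EReal.exists_between_coe_real hlt
  rw [EReal.coe_lt_coe_iff] at h1
  obtain ⟨N, hN⟩ := exists_nat_gt (max (Real.log C) 0 / (γ' - γ))
  have key : sSup {r : EReal | ∃ m n : ℕ, ∃ x₀ ∈ U, x₀ ≠ 0 ∧ N < n - m ∧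
      r = ((((n : ℝ) - (m : ℝ))⁻¹ * Real.log (‖sol A n x₀‖ / ‖sol A m x₀‖) : ℝ) : EReal)}
      ≤ (γ' : EReal) := by
    apply sSup_le
    rintro r ⟨m, n, x₀, hx₀U, hx₀, hmn, rfl⟩
    rw [EReal.coe_le_coe_iff]
    have hmn' : m ≤ n := by omega
    have hd' : (0 : ℝ) < (n : ℝ) - (m : ℝ) := by
      have : m < n := by omega
      exact sub_pos.mpr (by exact_mod_cast this)
    have hdN : ((N : ℝ) + 1) ≤ (n : ℝ) - (m : ℝ) := by
      have h3 : ((N + 1 : ℕ) : ℝ) ≤ ((n - m : ℕ) : ℝ) := by exact_mod_cast (by omega : N + 1 ≤ n - m)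
      rw [Nat.cast_sub hmn'] at h3
      push_cast at h3 ⊢
      linarith
    have hm0 : 0 < ‖sol A m x₀‖ := norm_sol_pos A m hx₀
    have hn0 : 0 < ‖sol A n x₀‖ := norm_sol_pos A n hx₀
    have hlog : Real.log (‖sol A n x₀‖ / ‖sol A m x₀‖) ≤
        Real.log C + γ * ((n : ℝ) - (m : ℝ)) := by
      have hratio : ‖sol A n x₀‖ / ‖sol A m x₀‖ ≤ C * Real.exp (γ * ((n : ℝ) - (m : ℝ))) := by
        rw [div_le_iff₀ hm0]
        exact hb m n hmn' x₀ hx₀U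
      calc Real.log (‖sol A n x₀‖ / ‖sol A m x₀‖)
          ≤ Real.log (C * Real.exp (γ * ((n : ℝ) - (m : ℝ)))) :=
            Real.log_le_log (div_pos hn0 hm0) hratio
        _ = Real.log C + γ * ((n : ℝ) - (m : ℝ)) := by
            rw [Real.log_mul (ne_of_gt hC) (Real.exp_ne_zero _), Real.log_exp]
    have h4 : ((n : ℝ) - (m : ℝ))⁻¹ * Real.log (‖sol A n x₀‖ / ‖sol A m x₀‖)
        ≤ ((n : ℝ) - (m : ℝ))⁻¹ * (Real.log C + γ * ((n : ℝ) - (m : ℝ))) :=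
      mul_le_mul_of_nonneg_left hlog (inv_nonneg.mpr hd'.le)
    have h5 : ((n : ℝ) - (m : ℝ))⁻¹ * (Real.log C + γ * ((n : ℝ) - (m : ℝ)))
        = Real.log C / ((n : ℝ) - (m : ℝ)) + γ := by
      field_simp
    have h6 : Real.log C / ((n : ℝ) - (m : ℝ)) ≤ max (Real.log C) 0 / ((N : ℝ) + 1) := by
      have ha : Real.log C / ((n : ℝ) - (m : ℝ)) ≤ max (Real.log C) 0 / ((n : ℝ) - (m : ℝ)) := by
        gcongr
        exact le_max_left _ _
      refine ha.trans ?_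
      gcongr
    have hfin : max (Real.log C) 0 / ((N : ℝ) + 1) ≤ γ' - γ := by
      rw [div_le_iff₀ (by positivity)]
      rw [div_lt_iff₀ (by linarith)] at hN
      nlinarith
    rw [h5] at h4
    linarith
  have hle : upperBohl A U ≤ (γ' : EReal) := by
    rw [upperBohl]
    exact (iInf_le _ N).trans key
  exact absurd h2 (not_lt.mpr hle)
lemma D1u_of_upperBohl_lt {d : ℕ} {A : ℕ → (Euc d ≃L[ℝ] Euc d)} (hA : BddSys A) {γ : ℝ}
    {U : Submodule ℝ (Euc d)} (h : upperBohl A U < (γ : EReal)) : D1u A γ U := by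
  obtain ⟨c, hc⟩ := hA.1
  set a : ℝ := max c 1 with ha_def
  have ha1 : 1 ≤ a := le_max_right _ _
  have ha : ∀ n, ‖(A n : Euc d →L[ℝ] Euc d)‖ ≤ a := fun n => (hc n).trans (le_max_left _ _)
  rw [upperBohl, iInf_lt_iff] at h
  obtain ⟨N, hN⟩ := h
  refine ⟨a ^ N * Real.exp (|γ| * N), by positivity, ?_⟩
  intro m n hmn x₀ hx₀U
  by_cases hx₀ : x₀ = 0
  · simp [hx₀, sol_eq_zero_iff A _ _ |>.mpr rfl,
      (sol_eq_zero_iff A n 0).mpr rfl, (sol_eq_zero_iff A m 0).mpr rfl]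
  have hm0 : 0 < ‖sol A m x₀‖ := norm_sol_pos A m hx₀
  have hn0 : 0 < ‖sol A n x₀‖ := norm_sol_pos A n hx₀
  have hC1 : (1 : ℝ) ≤ a ^ N * Real.exp (|γ| * N) := by
    have : (1:ℝ) ≤ a ^ N := one_le_pow₀ ha1
    nlinarith [Real.one_le_exp (by positivity : (0:ℝ) ≤ |γ| * N)]
  by_cases hcase : N < n - m
  · -- use the Bohl bound
    have hmem : ((((n : ℝ) - (m : ℝ))⁻¹ * Real.log (‖sol A n x₀‖ / ‖sol A m x₀‖) : ℝ) : EReal)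
        ∈ {r : EReal | ∃ m' n' : ℕ, ∃ x ∈ U, x ≠ 0 ∧ N < n' - m' ∧
          r = ((((n' : ℝ) - (m' : ℝ))⁻¹ * Real.log (‖sol A n' x‖ / ‖sol A m' x‖) : ℝ) : EReal)} :=
      ⟨m, n, x₀, hx₀U, hx₀, hcase, rfl⟩
    have hr := (le_sSup hmem).trans_lt hN
    rw [EReal.coe_lt_coe_iff] at hr
    have hd' : (0 : ℝ) < (n : ℝ) - (m : ℝ) := by
      have : m < n := by omega
      exact sub_pos.mpr (by exact_mod_cast this)
    have hlog : Real.log (‖sol A n x₀‖ / ‖sol A m x₀‖) < γ * ((n : ℝ) - (m : ℝ)) := by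
      rw [inv_mul_lt_iff₀ hd'] at hr
      linarith [hr]
    have hratio : ‖sol A n x₀‖ / ‖sol A m x₀‖ ≤ Real.exp (γ * ((n : ℝ) - (m : ℝ))) := by
      calc ‖sol A n x₀‖ / ‖sol A m x₀‖
          = Real.exp (Real.log (‖sol A n x₀‖ / ‖sol A m x₀‖)) :=
            (Real.exp_log (div_pos hn0 hm0)).symm
        _ ≤ Real.exp (γ * ((n : ℝ) - (m : ℝ))) := Real.exp_le_exp.mpr hlog.le
    have := (div_le_iff₀ hm0).mp hratio
    calc ‖sol A n x₀‖ ≤ Real.exp (γ * ((n : ℝ) - (m : ℝ))) * ‖sol A m x₀‖ := this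
      _ ≤ a ^ N * Real.exp (|γ| * N) * Real.exp (γ * ((n : ℝ) - (m : ℝ))) * ‖sol A m x₀‖ := by
          nlinarith [Real.exp_pos (γ * ((n : ℝ) - (m : ℝ))), hm0.le, hC1,
            mul_pos (Real.exp_pos (γ * ((n : ℝ) - (m : ℝ)))) hm0]
      _ = a ^ N * Real.exp (|γ| * N) * (Real.exp (γ * ((n : ℝ) - (m : ℝ))) * ‖sol A m x₀‖) := by ring
      _ = a ^ N * Real.exp (γ * ((n : ℝ) - (m : ℝ))) * Real.exp (|γ| * N) * ‖sol A m x₀‖ := by ring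
      _ = a ^ N * Real.exp (|γ| * N) * Real.exp (γ * ((n : ℝ) - (m : ℝ))) * ‖sol A m x₀‖ := by ring
  · -- short time: n - m ≤ N
    have hnm : n - m ≤ N := by omega
    have hgrow := sol_growth A ha ha1 x₀ hmn
    have hpow : a ^ (n - m) ≤ a ^ N := by
      have h0a : 0 ≤ a := by linarith
      gcongr
    have hcast : ((n : ℝ) - (m : ℝ)) = ((n - m : ℕ) : ℝ) := by
      rw [Nat.cast_sub hmn]
    have hexp : (1 : ℝ) ≤ Real.exp (|γ| * N) * Real.exp (γ * ((n : ℝ) - (m : ℝ))) := by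
      rw [← Real.exp_add]
      apply Real.one_le_exp
      have h7 : γ * ((n : ℝ) - (m : ℝ)) ≥ -(|γ| * ((n - m : ℕ) : ℝ)) := by
        rw [hcast]
        have hΔ : (0:ℝ) ≤ ((n - m : ℕ) : ℝ) := Nat.cast_nonneg _
        have := mul_le_mul_of_nonneg_right (neg_abs_le γ) hΔ
        linarith
      have h8 : |γ| * ((n - m : ℕ) : ℝ) ≤ |γ| * N := by
        apply mul_le_mul_of_nonneg_left _ (abs_nonneg γ)
        exact_mod_cast hnm
      linarith
    calc ‖sol A n x₀‖ ≤ a ^ (n - m) * ‖sol A m x₀‖ := hgrow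
      _ ≤ a ^ N * ‖sol A m x₀‖ := mul_le_mul_of_nonneg_right hpow hm0.le
      _ ≤ a ^ N * (Real.exp (|γ| * N) * Real.exp (γ * ((n : ℝ) - (m : ℝ)))) * ‖sol A m x₀‖ := by
          have hp : (0:ℝ) ≤ a ^ N * ‖sol A m x₀‖ := by positivity
          have h9 := mul_le_mul_of_nonneg_left hexp hp
          linarith [h9]
      _ = a ^ N * Real.exp (|γ| * N) * Real.exp (γ * ((n : ℝ) - (m : ℝ))) * ‖sol A m x₀‖ := by ring
/-- **Upper Bohl exponent and the dichotomy estimate `D1(γ,U)`.** -/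
theorem upperBohl_and_D1 {d : ℕ} (hd : 1 ≤ d)
    (A : ℕ → (Euc d ≃L[ℝ] Euc d)) (hA : BddSys A)
    (𝒱 : Set (Submodule ℝ (Euc d))) (h𝒱 : 𝒱.Nonempty)
    (𝒰 : Submodule ℝ (Euc d) → Set (Submodule ℝ (Euc d)))
    (h𝒰 : ∀ V ∈ 𝒱, (𝒰 V).Nonempty) (γ : ℝ) :
    ((∃ V ∈ 𝒱, ∀ U ∈ 𝒰 V, D1u A γ U) →
      (⨅ V ∈ 𝒱, ⨆ U ∈ 𝒰 V, upperBohl A U) ≤ (γ : EReal)) ∧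
    ((⨅ V ∈ 𝒱, ⨆ U ∈ 𝒰 V, upperBohl A U) < (γ : EReal) →
      ∃ V ∈ 𝒱, ∀ U ∈ 𝒰 V, D1u A γ U) := by
  constructor
  · rintro ⟨V, hV, hD⟩
    refine le_trans (iInf₂_le V hV) ?_
    exact iSup₂_le fun U hU => upperBohl_le_of_D1u (hD U hU)
  · intro hlt
    rw [iInf_lt_iff] at hlt
    obtain ⟨V, hlt⟩ := hlt
    rw [iInf_lt_iff] at hlt
    obtain ⟨hV, hlt⟩ := hlt
    refine ⟨V, hV, fun U hU => ?_⟩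
    exact D1u_of_upperBohl_lt hA ((le_iSup₂ (f := fun U _ => upperBohl A U) U hU).trans_lt hlt)

end
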